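/- Let m ≥ 1 be an integer and set W(m) = (−A⁶−A⁻⁶)·N(1) + (−A⁴−A⁻⁴+2)·P(m+1)·P̄(m) in ℤ[A, A⁻¹]. Then h(W(m)) = 4m+15 and ℓ(W(m)) = −4m−13, so that span(W(m)) = 8m+28; in particular span(W(m)) > 16. -/

import Mathlib

open LaurentPolynomial Finset

/-- The coefficient of `A^k` in the Laurent polynomial `y ∈ ℤ[A,A⁻¹]`. -/
noncomputable def coeffA (y : LaurentPolynomial ℤ) (k : ℤ) : ℤ := y.coeff k

/-- `y` has highest exponent `d`, with coefficient `c` (nonzero) on `A^d`. -/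
def HiCoeff (y : LaurentPolynomial ℤ) (d c : ℤ) : Prop :=
  coeffA y d = c ∧ c ≠ 0 ∧ ∀ k, d < k → coeffA y k = 0

/-- `y` has lowest exponent `d`, with coefficient `c` (nonzero) on `A^d`. -/
def LoCoeff (y : LaurentPolynomial ℤ) (d c : ℤ) : Prop :=
  coeffA y d = c ∧ c ≠ 0 ∧ ∀ k, k < d → coeffA y k = 0

/-- `y` has highest exponent `d`: `h(y) = d`. -/
def IsHi (y : LaurentPolynomial ℤ) (d : ℤ) : Prop :=
  coeffA y d ≠ 0 ∧ ∀ k, d < k → coeffA y k = 0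

/-- `y` has lowest exponent `d`: `ℓ(y) = d`. -/
def IsLo (y : LaurentPolynomial ℤ) (d : ℤ) : Prop :=
  coeffA y d ≠ 0 ∧ ∀ k, k < d → coeffA y k = 0

/-- P(n) = A^{−n−6} + (A⁴+A⁻⁴)·Σ_{k=1}^{n} (−1)^k A^{4k−n−2} -/
noncomputable def P (n : ℕ) : LaurentPolynomial ℤ :=
  T (-(n:ℤ) - 6) +
    (T 4 + T (-4)) * ∑ k ∈ Finset.Icc 1 n, (-1 : LaurentPolynomial ℤ)^k * T (4*(k:ℤ) - n - 2)

/-- P̄(n) = A^{n+6} + (A⁴+A⁻⁴)·Σ_{k=1}^{n} (−1)^k A^{−4k+n+2} -/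
noncomputable def Pbar (n : ℕ) : LaurentPolynomial ℤ :=
  T ((n:ℤ) + 6) +
    (T 4 + T (-4)) * ∑ k ∈ Finset.Icc 1 n, (-1 : LaurentPolynomial ℤ)^k * T (-4*(k:ℤ) + n + 2)

/-- Q(j) = −A^{2−j} + Σ_{k=0}^{j} (−1)^{k+1} A^{4k−j−2} -/
noncomputable def Q (j : ℕ) : LaurentPolynomial ℤ :=
  -T (2 - (j:ℤ)) + ∑ k ∈ Finset.range (j+1), (-1 : LaurentPolynomial ℤ)^(k+1) * T (4*(k:ℤ) - j - 2)

/-- N(j) = (−A⁶−A⁻⁶)·(−A³)^j + (−A⁴−A⁻⁴+2)·Q(j) -/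
noncomputable def N (j : ℕ) : LaurentPolynomial ℤ :=
  (-T 6 - T (-6)) * (-T 3)^j + (-T 4 - T (-4) + 2) * Q j

/-- R(m) = A^{−m−5} + (A⁴+A⁻⁴)·Σ_{k=1}^{m−1} (−1)^k A^{4k−m−1} -/
noncomputable def Rm (m : ℕ) : LaurentPolynomial ℤ :=
  T (-(m:ℤ) - 5) +
    (T 4 + T (-4)) * ∑ k ∈ Finset.Icc 1 (m-1), (-1 : LaurentPolynomial ℤ)^k * T (4*(k:ℤ) - m - 1)

-- AUXILIARY LEMMAS

lemma coeffA_T (n k : ℤ) : coeffA (T n) k = if n = k then 1 else 0 := T_apply k n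

lemma coeffA_add (f g : LaurentPolynomial ℤ) (k : ℤ) : coeffA (f+g) k = coeffA f k + coeffA g k := rfl

lemma coeffA_sub (f g : LaurentPolynomial ℤ) (k : ℤ) : coeffA (f-g) k = coeffA f k - coeffA g k := rfl

lemma coeffA_neg (f : LaurentPolynomial ℤ) (k : ℤ) : coeffA (-f) k = -coeffA f k := rfl

lemma coeffA_one (k : ℤ) : coeffA 1 k = if 0 = k then 1 else 0 := by
  rw [← T_zero]; exact coeffA_T 0 k

lemma coeffA_two (k : ℤ) : coeffA 2 k = if 0 = k then 2 else 0 := by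
  rw [show (2 : LaurentPolynomial ℤ) = 1 + 1 by norm_num, coeffA_add, coeffA_one]
  split_ifs <;> norm_num

lemma coeffA_sum {s : Finset ℕ} (f : ℕ → LaurentPolynomial ℤ) (k : ℤ) :
    coeffA (∑ i ∈ s, f i) k = ∑ i ∈ s, coeffA (f i) k := by
  unfold coeffA; rw [AddMonoidAlgebra.coeff_sum, Finsupp.finset_sum_apply]

lemma neg_one_pow_mul_T (k : ℕ) (a : ℤ) :
    (-1 : LaurentPolynomial ℤ)^k * T a = AddMonoidAlgebra.single a ((-1:ℤ)^k) := by
  rw [single_eq_C_mul_T]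
  congr 1
  rw [map_pow, map_neg, map_one]

lemma mul_coeff_bound_hi {f g : LaurentPolynomial ℤ} {d e : ℤ}
    (hf : ∀ k, d < k → coeffA f k = 0) (hg : ∀ k, e < k → coeffA g k = 0) :
    ∀ k, d + e < k → coeffA (f*g) k = 0 := by
  intro k hk
  show (f * g).coeff k = 0
  rw [AddMonoidAlgebra.coeff_mul]
  rw [Finsupp.sum]
  refine Finset.sum_eq_zero fun a ha => ?_
  rw [Finsupp.sum]
  refine Finset.sum_eq_zero fun b hb => ?_
  split_ifs with h
  · rcases lt_or_ge d a with h1 | h1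
    · rw [Finsupp.mem_support_iff] at ha; exact absurd (hf a h1) ha
    · have : e < b := by omega
      rw [Finsupp.mem_support_iff] at hb; exact absurd (hg b this) hb
  · rfl

lemma mul_coeff_bound_lo {f g : LaurentPolynomial ℤ} {d e : ℤ}
    (hf : ∀ k, k < d → coeffA f k = 0) (hg : ∀ k, k < e → coeffA g k = 0) :
    ∀ k, k < d + e → coeffA (f*g) k = 0 := by
  intro k hk
  show (f * g).coeff k = 0
  rw [AddMonoidAlgebra.coeff_mul]
  rw [Finsupp.sum]
  refine Finset.sum_eq_zero fun a ha => ?_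
  rw [Finsupp.sum]
  refine Finset.sum_eq_zero fun b hb => ?_
  split_ifs with h
  · rcases lt_or_ge a d with h1 | h1
    · rw [Finsupp.mem_support_iff] at ha; exact absurd (hf a h1) ha
    · have : b < e := by omega
      rw [Finsupp.mem_support_iff] at hb; exact absurd (hg b this) hb
  · rfl

lemma mul_coeff_top {f g : LaurentPolynomial ℤ} {d e : ℤ}
    (hf : ∀ k, d < k → coeffA f k = 0) (hg : ∀ k, e < k → coeffA g k = 0) :
    coeffA (f*g) (d+e) = coeffA f d * coeffA g e := by
  show (f * g).coeff (d+e) = f.coeff d * g.coeff e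
  rw [AddMonoidAlgebra.coeff_mul, Finsupp.sum]
  rw [Finset.sum_eq_single d]
  · rw [Finsupp.sum]
    rw [Finset.sum_eq_single e]
    · simp
    · intro b hb hbe
      rw [if_neg]; omega
    · intro he
      rw [Finsupp.notMem_support_iff] at he
      simp [he]
  · intro a ha had
    have hfa : a < d := by
      rcases lt_or_ge d a with h1 | h1
      · rw [Finsupp.mem_support_iff] at ha; exact absurd (hf a h1) ha
      · omega
    rw [Finsupp.sum]
    refine Finset.sum_eq_zero fun b hb => ?_
    rw [if_neg]
    intro h
    have : e < b := by omega
    rw [Finsupp.mem_support_iff] at hb; exact absurd (hg b this) hb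
  · intro hd
    rw [Finsupp.notMem_support_iff] at hd
    rw [hd]
    simp [Finsupp.sum]

lemma mul_coeff_bot {f g : LaurentPolynomial ℤ} {d e : ℤ}
    (hf : ∀ k, k < d → coeffA f k = 0) (hg : ∀ k, k < e → coeffA g k = 0) :
    coeffA (f*g) (d+e) = coeffA f d * coeffA g e := by
  show (f * g).coeff (d+e) = f.coeff d * g.coeff e
  rw [AddMonoidAlgebra.coeff_mul, Finsupp.sum]
  rw [Finset.sum_eq_single d]
  · rw [Finsupp.sum]
    rw [Finset.sum_eq_single e]
    · simp
    · intro b hb hbe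
      rw [if_neg]; omega
    · intro he
      rw [Finsupp.notMem_support_iff] at he
      simp [he]
  · intro a ha had
    have hfa : d < a := by
      rcases lt_or_ge a d with h1 | h1
      · rw [Finsupp.mem_support_iff] at ha; exact absurd (hf a h1) ha
      · omega
    rw [Finsupp.sum]
    refine Finset.sum_eq_zero fun b hb => ?_
    rw [if_neg]
    intro h
    have : b < e := by omega
    rw [Finsupp.mem_support_iff] at hb; exact absurd (hg b this) hb
  · intro hd
    rw [Finsupp.notMem_support_iff] at hd
    rw [hd]
    simp [Finsupp.sum]

lemma HiCoeff.mul {f g : LaurentPolynomial ℤ} {d e c c' : ℤ}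
    (hf : HiCoeff f d c) (hg : HiCoeff g e c') : HiCoeff (f*g) (d+e) (c*c') := by
  obtain ⟨h1, h2, h3⟩ := hf
  obtain ⟨g1, g2, g3⟩ := hg
  exact ⟨by rw [mul_coeff_top h3 g3, h1, g1], mul_ne_zero h2 g2, mul_coeff_bound_hi h3 g3⟩

lemma LoCoeff.mul {f g : LaurentPolynomial ℤ} {d e c c' : ℤ}
    (hf : LoCoeff f d c) (hg : LoCoeff g e c') : LoCoeff (f*g) (d+e) (c*c') := by
  obtain ⟨h1, h2, h3⟩ := hf
  obtain ⟨g1, g2, g3⟩ := hg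
  exact ⟨by rw [mul_coeff_bot h3 g3, h1, g1], mul_ne_zero h2 g2, mul_coeff_bound_lo h3 g3⟩

lemma HiCoeff.add_left {y z : LaurentPolynomial ℤ} {d c : ℤ}
    (hz : HiCoeff z d c) (hy : ∀ k, d ≤ k → coeffA y k = 0) : HiCoeff (y+z) d c := by
  obtain ⟨h1, h2, h3⟩ := hz
  refine ⟨?_, h2, fun k hk => ?_⟩
  · rw [coeffA_add, hy d le_rfl, h1, zero_add]
  · rw [coeffA_add, hy k (le_of_lt hk), h3 k hk, zero_add]

lemma LoCoeff.add_left {y z : LaurentPolynomial ℤ} {d c : ℤ}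
    (hz : LoCoeff z d c) (hy : ∀ k, k ≤ d → coeffA y k = 0) : LoCoeff (y+z) d c := by
  obtain ⟨h1, h2, h3⟩ := hz
  refine ⟨?_, h2, fun k hk => ?_⟩
  · rw [coeffA_add, hy d le_rfl, h1, zero_add]
  · rw [coeffA_add, hy k (le_of_lt hk), h3 k hk, zero_add]

lemma HiCoeff.add_right {y z : LaurentPolynomial ℤ} {d c : ℤ}
    (hy : HiCoeff y d c) (hz : ∀ k, d ≤ k → coeffA z k = 0) : HiCoeff (y+z) d c := by
  obtain ⟨h1, h2, h3⟩ := hy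
  refine ⟨?_, h2, fun k hk => ?_⟩
  · rw [coeffA_add, hz d le_rfl, h1, add_zero]
  · rw [coeffA_add, hz k (le_of_lt hk), h3 k hk, add_zero]

lemma LoCoeff.add_right {y z : LaurentPolynomial ℤ} {d c : ℤ}
    (hy : LoCoeff y d c) (hz : ∀ k, k ≤ d → coeffA z k = 0) : LoCoeff (y+z) d c := by
  obtain ⟨h1, h2, h3⟩ := hy
  refine ⟨?_, h2, fun k hk => ?_⟩
  · rw [coeffA_add, hz d le_rfl, h1, add_zero]
  · rw [coeffA_add, hz k (le_of_lt hk), h3 k hk, add_zero]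

lemma HiCoeff.congr {f : LaurentPolynomial ℤ} {d c d' c' : ℤ}
    (h : HiCoeff f d c) (hd : d = d') (hc : c = c') : HiCoeff f d' c' := hd ▸ hc ▸ h

lemma LoCoeff.congr {f : LaurentPolynomial ℤ} {d c d' c' : ℤ}
    (h : LoCoeff f d c) (hd : d = d') (hc : c = c') : LoCoeff f d' c' := hd ▸ hc ▸ h

lemma coeffA_signed_sum (s : Finset ℕ) (e : ℕ → ℤ) (j : ℤ) :
    coeffA (∑ k ∈ s, (-1 : LaurentPolynomial ℤ)^k * T (e k)) j
      = ∑ k ∈ s, (if e k = j then (-1:ℤ)^k else 0) := by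
  rw [coeffA_sum]
  refine Finset.sum_congr rfl fun k _ => ?_
  rw [neg_one_pow_mul_T]
  show (AddMonoidAlgebra.single (e k) ((-1:ℤ)^k)).coeff j = _
  rw [AddMonoidAlgebra.coeff_single, Finsupp.single_apply]

lemma TT_hi : HiCoeff (T 4 + T (-4)) 4 1 := by
  refine ⟨?_, one_ne_zero, fun k hk => ?_⟩
  · simp only [coeffA_add, coeffA_T]; norm_num
  · simp only [coeffA_add, coeffA_T]; split_ifs <;> omega

lemma TT_lo : LoCoeff (T 4 + T (-4)) (-4) 1 := by
  refine ⟨?_, one_ne_zero, fun k hk => ?_⟩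
  · simp only [coeffA_add, coeffA_T]; norm_num
  · simp only [coeffA_add, coeffA_T]; split_ifs <;> omega

lemma sumP_hi (n : ℕ) (hn : 1 ≤ n) :
    HiCoeff (∑ k ∈ Finset.Icc 1 n, (-1 : LaurentPolynomial ℤ)^k * T (4*(k:ℤ) - n - 2))
      (3*(n:ℤ) - 2) ((-1)^n) := by
  refine ⟨?_, by positivity, fun j hj => ?_⟩
  · rw [coeffA_signed_sum]
    have h2 : ∀ k ∈ Finset.Icc 1 n, (if 4*(k:ℤ) - n - 2 = 3*n - 2 then ((-1:ℤ))^k else 0) = (if k = n then ((-1:ℤ))^k else 0) := by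
      intro k hk
      simp only [Finset.mem_Icc] at hk
      exact if_congr (by constructor <;> intro h <;> omega) rfl rfl
    rw [Finset.sum_congr rfl h2, Finset.sum_ite_eq' (Finset.Icc 1 n) n, if_pos (by simp [hn])]
  · rw [coeffA_signed_sum]
    refine Finset.sum_eq_zero fun k hk => ?_
    simp only [Finset.mem_Icc] at hk
    rw [if_neg (by omega)]

lemma sumP_lo (n : ℕ) (hn : 1 ≤ n) :
    LoCoeff (∑ k ∈ Finset.Icc 1 n, (-1 : LaurentPolynomial ℤ)^k * T (4*(k:ℤ) - n - 2))
      (2 - (n:ℤ)) (-1) := by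
  refine ⟨?_, by norm_num, fun j hj => ?_⟩
  · rw [coeffA_signed_sum]
    have h2 : ∀ k ∈ Finset.Icc 1 n, (if 4*(k:ℤ) - n - 2 = 2 - n then ((-1:ℤ))^k else 0) = (if k = 1 then ((-1:ℤ))^k else 0) := by
      intro k hk
      simp only [Finset.mem_Icc] at hk
      exact if_congr (by constructor <;> intro h <;> omega) rfl rfl
    rw [Finset.sum_congr rfl h2, Finset.sum_ite_eq' (Finset.Icc 1 n) 1, if_pos (by simp [hn]), pow_one]
  · rw [coeffA_signed_sum]
    refine Finset.sum_eq_zero fun k hk => ?_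
    simp only [Finset.mem_Icc] at hk
    rw [if_neg (by omega)]

lemma sumPbar_hi (n : ℕ) (hn : 1 ≤ n) :
    HiCoeff (∑ k ∈ Finset.Icc 1 n, (-1 : LaurentPolynomial ℤ)^k * T (-4*(k:ℤ) + n + 2))
      ((n:ℤ) - 2) (-1) := by
  refine ⟨?_, by norm_num, fun j hj => ?_⟩
  · rw [coeffA_signed_sum]
    have h2 : ∀ k ∈ Finset.Icc 1 n, (if -4*(k:ℤ) + n + 2 = n - 2 then ((-1:ℤ))^k else 0) = (if k = 1 then ((-1:ℤ))^k else 0) := by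
      intro k hk
      simp only [Finset.mem_Icc] at hk
      exact if_congr (by constructor <;> intro h <;> omega) rfl rfl
    rw [Finset.sum_congr rfl h2, Finset.sum_ite_eq' (Finset.Icc 1 n) 1, if_pos (by simp [hn]), pow_one]
  · rw [coeffA_signed_sum]
    refine Finset.sum_eq_zero fun k hk => ?_
    simp only [Finset.mem_Icc] at hk
    rw [if_neg (by omega)]

lemma sumPbar_lo (n : ℕ) (hn : 1 ≤ n) :
    LoCoeff (∑ k ∈ Finset.Icc 1 n, (-1 : LaurentPolynomial ℤ)^k * T (-4*(k:ℤ) + n + 2))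
      (2 - 3*(n:ℤ)) ((-1)^n) := by
  refine ⟨?_, by positivity, fun j hj => ?_⟩
  · rw [coeffA_signed_sum]
    have h2 : ∀ k ∈ Finset.Icc 1 n, (if -4*(k:ℤ) + n + 2 = 2 - 3*n then ((-1:ℤ))^k else 0) = (if k = n then ((-1:ℤ))^k else 0) := by
      intro k hk
      simp only [Finset.mem_Icc] at hk
      exact if_congr (by constructor <;> intro h <;> omega) rfl rfl
    rw [Finset.sum_congr rfl h2, Finset.sum_ite_eq' (Finset.Icc 1 n) n, if_pos (by simp [hn])]
  · rw [coeffA_signed_sum]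
    refine Finset.sum_eq_zero fun k hk => ?_
    simp only [Finset.mem_Icc] at hk
    rw [if_neg (by omega)]

lemma P_hi (n : ℕ) (hn : 1 ≤ n) : HiCoeff (P n) (3*(n:ℤ) + 2) ((-1)^n) := by
  unfold P
  refine HiCoeff.add_left (((TT_hi.mul (sumP_hi n hn)).congr (by ring) (one_mul _))) ?_
  intro k hk
  rw [coeffA_T, if_neg (by omega)]

lemma P_lo (n : ℕ) (hn : 1 ≤ n) : LoCoeff (P n) (-(n:ℤ) - 6) 1 := by
  unfold P
  have hprod := (TT_lo.mul (sumP_lo n hn)).congr (show (-4:ℤ) + (2 - n) = -(n:ℤ) - 2 by ring) rfl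
  refine LoCoeff.add_right ⟨?_, one_ne_zero, fun k hk => ?_⟩ ?_
  · rw [coeffA_T, if_pos rfl]
  · rw [coeffA_T, if_neg (by omega)]
  · intro k hk
    exact hprod.2.2 k (by omega)

lemma Pbar_hi (n : ℕ) (hn : 1 ≤ n) : HiCoeff (Pbar n) ((n:ℤ) + 6) 1 := by
  unfold Pbar
  have hprod := (TT_hi.mul (sumPbar_hi n hn)).congr (show (4:ℤ) + ((n:ℤ) - 2) = (n:ℤ) + 2 by ring) rfl
  refine HiCoeff.add_right ⟨?_, one_ne_zero, fun k hk => ?_⟩ ?_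
  · rw [coeffA_T, if_pos rfl]
  · rw [coeffA_T, if_neg (by omega)]
  · intro k hk
    exact hprod.2.2 k (by omega)

lemma Pbar_lo (n : ℕ) (hn : 1 ≤ n) : LoCoeff (Pbar n) (-3*(n:ℤ) - 2) ((-1)^n) := by
  unfold Pbar
  refine LoCoeff.add_left (((TT_lo.mul (sumPbar_lo n hn)).congr (by ring) (one_mul _))) ?_
  intro k hk
  rw [coeffA_T, if_neg (by omega)]

lemma F_hi : HiCoeff (-T 4 - T (-4) + 2 : LaurentPolynomial ℤ) 4 (-1) := by
  refine ⟨?_, by norm_num, fun k hk => ?_⟩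
  · simp only [coeffA_add, coeffA_sub, coeffA_neg, coeffA_T, coeffA_two]
    norm_num
  · simp only [coeffA_add, coeffA_sub, coeffA_neg, coeffA_T, coeffA_two]
    split_ifs <;> omega

lemma F_lo : LoCoeff (-T 4 - T (-4) + 2 : LaurentPolynomial ℤ) (-4) (-1) := by
  refine ⟨?_, by norm_num, fun k hk => ?_⟩
  · simp only [coeffA_add, coeffA_sub, coeffA_neg, coeffA_T, coeffA_two]
    norm_num
  · simp only [coeffA_add, coeffA_sub, coeffA_neg, coeffA_T, coeffA_two]
    split_ifs <;> omega

lemma Q1_eq : Q 1 = -T (-3) := by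
  unfold Q
  rw [Finset.sum_range_succ, Finset.sum_range_succ, Finset.sum_range_zero]
  norm_num

lemma G_hibound : ∀ k, (6:ℤ) < k → coeffA (-T 6 - T (-6) : LaurentPolynomial ℤ) k = 0 := by
  intro k hk
  simp only [coeffA_sub, coeffA_neg, coeffA_T]
  split_ifs <;> omega

lemma G_lobound : ∀ k, k < (-6:ℤ) → coeffA (-T 6 - T (-6) : LaurentPolynomial ℤ) k = 0 := by
  intro k hk
  simp only [coeffA_sub, coeffA_neg, coeffA_T]
  split_ifs <;> omega

lemma N1_hibound : ∀ k, (9:ℤ) < k → coeffA (N 1) k = 0 := by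
  intro k hk
  unfold N
  rw [Q1_eq, pow_one, coeffA_add]
  have h1 : coeffA ((-T 6 - T (-6)) * -T 3 : LaurentPolynomial ℤ) k = 0 := by
    refine mul_coeff_bound_hi (e := 3) G_hibound (fun j hj => ?_) k (by omega)
    · simp only [coeffA_neg, coeffA_T]
      rw [if_neg (by omega)]; ring
  have h2 : coeffA ((-T 4 - T (-4) + 2) * -T (-3) : LaurentPolynomial ℤ) k = 0 := by
    refine mul_coeff_bound_hi (e := -3) F_hi.2.2 (fun j hj => ?_) k (by omega)
    · simp only [coeffA_neg, coeffA_T]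
      rw [if_neg (by omega)]; ring
  rw [h1, h2, add_zero]

lemma N1_lobound : ∀ k, k < (-7:ℤ) → coeffA (N 1) k = 0 := by
  intro k hk
  unfold N
  rw [Q1_eq, pow_one, coeffA_add]
  have h1 : coeffA ((-T 6 - T (-6)) * -T 3 : LaurentPolynomial ℤ) k = 0 := by
    refine mul_coeff_bound_lo (e := 3) G_lobound (fun j hj => ?_) k (by omega)
    · simp only [coeffA_neg, coeffA_T]
      rw [if_neg (by omega)]; ring
  have h2 : coeffA ((-T 4 - T (-4) + 2) * -T (-3) : LaurentPolynomial ℤ) k = 0 := by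
    refine mul_coeff_bound_lo (e := -3) F_lo.2.2 (fun j hj => ?_) k (by omega)
    · simp only [coeffA_neg, coeffA_T]
      rw [if_neg (by omega)]; ring
  rw [h1, h2, add_zero]

lemma GN1_hibound : ∀ k, (15:ℤ) < k → coeffA ((-T 6 - T (-6)) * N 1) k = 0 := by
  intro k hk
  exact mul_coeff_bound_hi G_hibound N1_hibound k (by omega)

lemma GN1_lobound : ∀ k, k < (-13:ℤ) → coeffA ((-T 6 - T (-6)) * N 1) k = 0 := by
  intro k hk
  exact mul_coeff_bound_lo G_lobound N1_lobound k (by omega)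

/-- for m ≥ 1, W(m) = (−A⁶−A⁻⁶)·N(1) + (−A⁴−A⁻⁴+2)·P(m+1)·P̄(m)
has h = 4m+15, ℓ = −4m−13, span 8m+28 > 16. -/
theorem stmt_5 (m : ℕ) (hm : 1 ≤ m)
    (W : LaurentPolynomial ℤ)
    (hW : W = (-T 6 - T (-6)) * N 1 + (-T 4 - T (-4) + 2) * (P (m+1) * Pbar m)) :
    IsHi W (4*(m:ℤ) + 15) ∧ IsLo W (-4*(m:ℤ) - 13) ∧
    (4*(m:ℤ) + 15) - (-4*(m:ℤ) - 13) = 8*(m:ℤ) + 28 ∧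
    8*(m:ℤ) + 28 > 16 := by
  have hm' : (1:ℤ) ≤ (m:ℤ) := by exact_mod_cast hm
  have hP_hi := P_hi (m+1) (by omega)
  have hP_lo := P_lo (m+1) (by omega)
  have hPb_hi := Pbar_hi m hm
  have hPb_lo := Pbar_lo m hm
  -- top of F * (P * Pbar)
  have htop : HiCoeff ((-T 4 - T (-4) + 2) * (P (m+1) * Pbar m)) (4*(m:ℤ) + 15) ((-1)^m) := by
    refine (F_hi.mul (hP_hi.mul hPb_hi)).congr ?_ ?_
    · push_cast; ring
    · have : ((-1:ℤ))^(m+1) = -(-1)^m := by rw [pow_succ]; ring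
      rw [this]; ring
  have hbot : LoCoeff ((-T 4 - T (-4) + 2) * (P (m+1) * Pbar m)) (-4*(m:ℤ) - 13) (-(-1)^m) := by
    refine (F_lo.mul (hP_lo.mul hPb_lo)).congr ?_ ?_
    · push_cast; ring
    · ring
  have hWhi : HiCoeff W (4*(m:ℤ) + 15) ((-1)^m) := by
    rw [hW]
    exact htop.add_left (fun k hk => GN1_hibound k (by omega))
  have hWlo : LoCoeff W (-4*(m:ℤ) - 13) (-(-1)^m) := by
    rw [hW]
    exact hbot.add_left (fun k hk => GN1_lobound k (by omega))
  refine ⟨⟨?_, hWhi.2.2⟩, ⟨?_, hWlo.2.2⟩, by ring, by omega⟩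
  · rw [hWhi.1]; exact hWhi.2.1
  · rw [hWlo.1]; exact hWlo.2.1
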